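/- Let Γ be a connected G-arc-transitive graph such that G is bi-quasiprimitive on V(Γ); then Γ is bipartite, with bipartite halves Δ_0 and Δ_1. If the subgroup G^+ of G stabilizing both halves setwise acts unfaithfully on Δ_0 and unfaithfully on Δ_1, then Γ is isomorphic to the complete bipartite graph K_{n,n} for some n ≥ 2. -/

import Mathlib

open SimpleGraph

namespace ATB

variable {V : Type*}

/-- `σ` is an automorphism of the graph `Γ`. -/
def IsAut (Γ : SimpleGraph V) (σ : Equiv.Perm V) : Prop :=
  ∀ u v : V, Γ.Adj (σ u) (σ v) ↔ Γ.Adj u v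

/-- The full automorphism group of `Γ`, as a subgroup of `Equiv.Perm V`. -/
def autGroup (Γ : SimpleGraph V) : Subgroup (Equiv.Perm V) where
  carrier := {σ | IsAut Γ σ}
  one_mem' := by intro u v; simp
  mul_mem' := by
    intro a b ha hb u v
    rw [show ((a * b) u) = a (b u) from rfl, show ((a * b) v) = a (b v) from rfl,
      ha (b u) (b v), hb u v]
  inv_mem' := by
    intro a ha u v
    have h := ha (a⁻¹ u) (a⁻¹ v)
    rw [show a (a⁻¹ u) = u from Equiv.apply_symm_apply a u,
      show a (a⁻¹ v) = v from Equiv.apply_symm_apply a v] at h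
    exact h.symm

/-- `G` is transitive on the vertices. -/
def VertexTrans (G : Subgroup (Equiv.Perm V)) : Prop := ∀ u v : V, ∃ σ ∈ G, σ u = v

/-- `G` is transitive on the arcs (ordered pairs of adjacent vertices) of `Γ`. -/
def ArcTrans (Γ : SimpleGraph V) (G : Subgroup (Equiv.Perm V)) : Prop :=
  ∀ u v u' v' : V, Γ.Adj u v → Γ.Adj u' v' → ∃ σ ∈ G, σ u = u' ∧ σ v = v'

/-- `Γ` is arc-transitive (with respect to its full automorphism group). -/
def IsArcTransitive (Γ : SimpleGraph V) : Prop := ArcTrans Γ (autGroup Γ)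

/-- A circulant graph: there is an automorphism of order `|V|` acting transitively,
i.e. a cyclic subgroup of the automorphism group acting regularly on the vertices. -/
def IsCirculant (Γ : SimpleGraph V) : Prop :=
  ∃ σ : Equiv.Perm V, IsAut Γ σ ∧ orderOf σ = Nat.card V ∧
    ∀ v w : V, ∃ k : ℕ, (σ ^ k) v = w

/-- A bicirculant graph on `2n` vertices: an automorphism of order `n` with exactly two
orbits (necessarily both of length `n`). -/
def IsBicirculant (Γ : SimpleGraph V) : Prop :=
  ∃ σ : Equiv.Perm V, IsAut Γ σ ∧ 2 * orderOf σ = Nat.card V ∧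
    ∃ v w : V, (∀ u : V, (∃ k : ℕ, (σ ^ k) v = u) ∨ (∃ k : ℕ, (σ ^ k) w = u)) ∧
      ∀ k : ℕ, (σ ^ k) v ≠ w

/-- The orbit of `v` under a subgroup `H` of permutations. -/
def orb (H : Subgroup (Equiv.Perm V)) (v : V) : Set V := {w | ∃ σ ∈ H, σ v = w}

/-- `H` acts semiregularly: only the identity fixes a point. -/
def Semiregular (H : Subgroup (Equiv.Perm V)) : Prop :=
  ∀ σ ∈ H, σ ≠ 1 → ∀ v : V, σ v ≠ v

/-- `H` acts regularly on the vertices. -/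
def RegularOn (H : Subgroup (Equiv.Perm V)) : Prop := VertexTrans H ∧ Semiregular H

/-- `H` has exactly two orbits, namely those of `v` and `w`. -/
def TwoOrbits (H : Subgroup (Equiv.Perm V)) (v w : V) : Prop :=
  w ∉ orb H v ∧ ∀ u : V, u ∈ orb H v ∨ u ∈ orb H w

/-- `N` is a normal subgroup of `G`. -/
def NormalIn (N G : Subgroup (Equiv.Perm V)) : Prop :=
  N ≤ G ∧ ∀ g ∈ G, ∀ x ∈ N, g * x * g⁻¹ ∈ N

/-- `N` has at most `k` orbits. -/
def AtMostOrbits (N : Subgroup (Equiv.Perm V)) (k : ℕ) : Prop :=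
  ∃ f : Fin k → V, ∀ v : V, ∃ i, v ∈ orb N (f i)

/-- `N` has at least three orbits. -/
def AtLeastThreeOrbits (N : Subgroup (Equiv.Perm V)) : Prop :=
  ∃ a b c : V, b ∉ orb N a ∧ c ∉ orb N a ∧ c ∉ orb N b

/-- `G` is quasiprimitive: transitive, and every nontrivial normal subgroup is transitive. -/
def Quasiprimitive (G : Subgroup (Equiv.Perm V)) : Prop :=
  VertexTrans G ∧ ∀ N : Subgroup (Equiv.Perm V), NormalIn N G → N ≠ ⊥ → VertexTrans N

/-- `G` is bi-quasiprimitive: transitive, every nontrivial normal subgroup has at most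
two orbits, and some nontrivial normal subgroup has exactly two orbits. -/
def BiQuasiprimitive (G : Subgroup (Equiv.Perm V)) : Prop :=
  VertexTrans G ∧
    (∀ N : Subgroup (Equiv.Perm V), NormalIn N G → N ≠ ⊥ → AtMostOrbits N 2) ∧
    ∃ N : Subgroup (Equiv.Perm V), NormalIn N G ∧ N ≠ ⊥ ∧ ∃ v w : V, TwoOrbits N v w

/-- `B` is a block for the action of `G`. -/
def IsBlockFor (G : Subgroup (Equiv.Perm V)) (B : Set V) : Prop :=
  ∀ σ ∈ G, ⇑σ '' B = B ∨ Disjoint (⇑σ '' B) B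

/-- `G` is primitive: transitive and every block is trivial. -/
def Primitive (G : Subgroup (Equiv.Perm V)) : Prop :=
  VertexTrans G ∧ ∀ B : Set V, IsBlockFor G B → B.Subsingleton ∨ B = Set.univ

/-- `G` is 2-transitive on the vertices. -/
def TwoTrans (G : Subgroup (Equiv.Perm V)) : Prop :=
  ∀ u v u' v' : V, u ≠ v → u' ≠ v' → ∃ σ ∈ G, σ u = u' ∧ σ v = v'

/-- `G` is 2-transitive on the subset `Δ`. -/
def TwoTransOn (G : Subgroup (Equiv.Perm V)) (Δ : Set V) : Prop :=
  ∀ u ∈ Δ, ∀ v ∈ Δ, ∀ u' ∈ Δ, ∀ v' ∈ Δ, u ≠ v → u' ≠ v' →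
    ∃ σ ∈ G, σ u = u' ∧ σ v = v'

/-- `G` is transitive on the subset `Δ`. -/
def TransOn (G : Subgroup (Equiv.Perm V)) (Δ : Set V) : Prop :=
  ∀ u ∈ Δ, ∀ v ∈ Δ, ∃ σ ∈ G, σ u = v

/-- `G` acts faithfully on the subset `Δ`. -/
def FaithfulOn (G : Subgroup (Equiv.Perm V)) (Δ : Set V) : Prop :=
  ∀ σ ∈ G, (∀ v ∈ Δ, σ v = v) → σ = 1

/-- `Δ₀, Δ₁` form a bipartition of the graph `Γ`. -/
structure IsBipartition (Γ : SimpleGraph V) (Δ₀ Δ₁ : Set V) : Prop where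
  covers : Δ₀ ∪ Δ₁ = Set.univ
  disj : Disjoint Δ₀ Δ₁
  not_adj₀ : ∀ u ∈ Δ₀, ∀ v ∈ Δ₀, ¬Γ.Adj u v
  not_adj₁ : ∀ u ∈ Δ₁, ∀ v ∈ Δ₁, ¬Γ.Adj u v

/-- The setwise stabilizer of `Δ` in `G`. -/
def setStab (G : Subgroup (Equiv.Perm V)) (Δ : Set V) : Subgroup (Equiv.Perm V) where
  carrier := {σ | σ ∈ G ∧ ⇑σ '' Δ = Δ}
  one_mem' := ⟨G.one_mem, by simp⟩
  mul_mem' := by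
    rintro a b ⟨haG, haΔ⟩ ⟨hbG, hbΔ⟩
    refine ⟨G.mul_mem haG hbG, ?_⟩
    rw [show ⇑(a * b) = ⇑a ∘ ⇑b from rfl, Set.image_comp, hbΔ, haΔ]
  inv_mem' := by
    rintro a ⟨haG, haΔ⟩
    refine ⟨G.inv_mem haG, ?_⟩
    conv_lhs => rw [← haΔ]
    rw [show ⇑a⁻¹ = ⇑a.symm from rfl]
    exact Equiv.symm_image_image a Δ

/-- The subgroup of `G` stabilizing both `Δ₀` and `Δ₁` setwise (`G⁺`). -/
def plusStab (G : Subgroup (Equiv.Perm V)) (Δ₀ Δ₁ : Set V) : Subgroup (Equiv.Perm V) :=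
  setStab (setStab G Δ₀) Δ₁

/-- The stabilizer of the point `v` in `G`. -/
def stabPt (G : Subgroup (Equiv.Perm V)) (v : V) : Subgroup (Equiv.Perm V) :=
  setStab G {v}

/-- A transitive group `G` has rank `k`: every point stabilizer has exactly `k` orbits. -/
def HasRank (G : Subgroup (Equiv.Perm V)) (k : ℕ) : Prop :=
  ∀ v : V, ∃ f : Fin k → V,
    (∀ i j : Fin k, i ≠ j → f j ∉ orb (stabPt G v) (f i)) ∧
    ∀ u : V, ∃ i : Fin k, u ∈ orb (stabPt G v) (f i)

/-- `G` is of affine type over `GF(2)`: it has a regular normal subgroup of exponent 2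
(an elementary abelian 2-group); equivalently `G` embeds in `AGL(m,2)` in its natural action. -/
def AffineTypeTwo (G : Subgroup (Equiv.Perm V)) : Prop :=
  ∃ N : Subgroup (Equiv.Perm V), NormalIn N G ∧ RegularOn N ∧ ∀ σ ∈ N, σ * σ = 1

/-- `P` is a `G`-invariant partition of the vertex set. -/
structure IsInvPartition (G : Subgroup (Equiv.Perm V)) (P : Set (Set V)) : Prop where
  nonempty : ∀ B ∈ P, B.Nonempty
  covers : ∀ v : V, ∃ B ∈ P, v ∈ B
  disj : ∀ B ∈ P, ∀ C ∈ P, B ≠ C → Disjoint B C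
  inv : ∀ σ ∈ G, ∀ B ∈ P, ⇑σ '' B ∈ P

/-- `Q` is a block for the induced action of `G` on the partition `P`. -/
def PartBlock (G : Subgroup (Equiv.Perm V)) (P Q : Set (Set V)) : Prop :=
  Q ⊆ P ∧ ∀ σ ∈ G,
    (fun B => ⇑σ '' B) '' Q = Q ∨ Disjoint ((fun B => ⇑σ '' B) '' Q) Q

/-- `G` is transitive on the parts of `P`. -/
def TransOnParts (G : Subgroup (Equiv.Perm V)) (P : Set (Set V)) : Prop :=
  ∀ B ∈ P, ∀ C ∈ P, ∃ σ ∈ G, ⇑σ '' B = C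

/-- The induced action of `G` on the partition `P` is primitive. -/
def PrimitiveOnParts (G : Subgroup (Equiv.Perm V)) (P : Set (Set V)) : Prop :=
  TransOnParts G P ∧ ∀ Q : Set (Set V), PartBlock G P Q → Q.Subsingleton ∨ Q = P

/-- `G` acts faithfully on the partition `P`. -/
def FaithfulOnParts (G : Subgroup (Equiv.Perm V)) (P : Set (Set V)) : Prop :=
  ∀ σ ∈ G, (∀ B ∈ P, ⇑σ '' B = B) → σ = 1

/-- The induced action of `G` on the partition `P` is 2-transitive. -/
def TwoTransOnParts (G : Subgroup (Equiv.Perm V)) (P : Set (Set V)) : Prop :=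
  ∀ B ∈ P, ∀ C ∈ P, ∀ B' ∈ P, ∀ C' ∈ P, B ≠ C → B' ≠ C' →
    ∃ σ ∈ G, ⇑σ '' B = B' ∧ ⇑σ '' C = C'

/-- `H` has exactly two orbits of equal size on the subset `Δ`. -/
def TwoEqualOrbitsOn (H : Subgroup (Equiv.Perm V)) (Δ : Set V) : Prop :=
  ∃ a ∈ Δ, ∃ b ∈ Δ, orb H a ∪ orb H b = Δ ∧ Disjoint (orb H a) (orb H b) ∧
    (orb H a).ncard = (orb H b).ncard

/-- `G` is almost simple: it has a nonabelian simple normal subgroup with trivial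
centralizer, i.e. `S ≤ G ≤ Aut(S)` for a nonabelian simple group `S`. -/
def AlmostSimple (G : Subgroup (Equiv.Perm V)) : Prop :=
  ∃ S : Subgroup (Equiv.Perm V), S ≤ G ∧ (∀ g ∈ G, ∀ s ∈ S, g * s * g⁻¹ ∈ S) ∧
    IsSimpleGroup ↥S ∧ (∃ a ∈ S, ∃ b ∈ S, a * b ≠ b * a) ∧
    ∀ g ∈ G, (∀ s ∈ S, g * s = s * g) → g = 1

/-- The setoid on `V` whose classes are the orbits of `N`. -/
def orbSetoid (N : Subgroup (Equiv.Perm V)) : Setoid V where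
  r u v := ∃ σ ∈ N, σ u = v
  iseqv := by
    refine ⟨fun u => ⟨1, N.one_mem, rfl⟩, ?_, ?_⟩
    · rintro u v ⟨σ, hσ, rfl⟩
      exact ⟨σ⁻¹, N.inv_mem hσ, Equiv.symm_apply_apply σ u⟩
    · rintro u v w ⟨σ, hσ, rfl⟩ ⟨τ, hτ, rfl⟩
      exact ⟨τ * σ, N.mul_mem hτ hσ, rfl⟩

/-- The set of orbits of `N` on `V`. -/
abbrev orbQuot (N : Subgroup (Equiv.Perm V)) : Type _ := Quotient (orbSetoid N)

/-- The orbit of `v`, as a vertex of the quotient. -/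
def cls (N : Subgroup (Equiv.Perm V)) (v : V) : orbQuot N := Quotient.mk (orbSetoid N) v

/-- The quotient graph of `Γ` by a partition given as a setoid: parts are adjacent
iff some vertex of one is adjacent to some vertex of the other. -/
def setoidQuot (Γ : SimpleGraph V) (s : Setoid V) : SimpleGraph (Quotient s) where
  Adj A B := A ≠ B ∧ ∃ u v : V, Γ.Adj u v ∧ Quotient.mk s u = A ∧ Quotient.mk s v = B
  symm := by
    refine ⟨?_⟩
    rintro A B ⟨hne, u, v, h, hu, hv⟩
    exact ⟨hne.symm, v, u, h.symm, hv, hu⟩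
  loopless := by
    refine ⟨?_⟩
    rintro A ⟨hne, -⟩
    exact hne rfl

/-- The quotient graph `Γ_N` of `Γ` by the orbits of `N`. -/
def quotGraph (Γ : SimpleGraph V) (N : Subgroup (Equiv.Perm V)) : SimpleGraph (orbQuot N) :=
  setoidQuot Γ (orbSetoid N)

/-- `Γ` is an `r`-cover of the quotient graph `Γ_N`: for every edge `{B,C}` of `Γ_N`
and every `v ∈ B`, `v` has exactly `r` neighbours in `C`. -/
def IsRCover (Γ : SimpleGraph V) (N : Subgroup (Equiv.Perm V)) (r : ℕ) : Prop :=
  ∀ (v : V) (C : orbQuot N), (quotGraph Γ N).Adj (cls N v) C →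
    {u : V | Γ.Adj v u ∧ cls N u = C}.ncard = r

/-! ## The particular graphs -/

/-- The complete multipartite graph with `m` parts of size `b`. -/
def completeMultipartite (m b : ℕ) : SimpleGraph (Fin m × Fin b) :=
  SimpleGraph.fromRel fun u v => u.1 ≠ v.1

/-- `K_{n,n}` minus a perfect matching. -/
def knnMinus (n : ℕ) : SimpleGraph (Fin n ⊕ Fin n) :=
  SimpleGraph.fromRel fun u v => ∃ i j : Fin n, i ≠ j ∧ u = Sum.inl i ∧ v = Sum.inr j

/-- The graph `G(2p,r)`: bipartite on two copies of `Z_p`, with `x ~ y'` iff `y - x`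
lies in the unique subgroup of order `r` of the multiplicative group (the solutions
of `z^r = 1`). -/
def graphG (p r : ℕ) : SimpleGraph (ZMod p ⊕ ZMod p) :=
  SimpleGraph.fromRel fun u v =>
    ∃ x y : ZMod p, u = Sum.inl x ∧ v = Sum.inr y ∧ (y - x) ^ r = 1

/-- The circulant `Cay(p,e) = Cay(Z_p, S)` where `S` is the unique subgroup of order `e`
of the multiplicative group of `Z_p` (the solutions of `z^e = 1`). -/
def cayCirc (p e : ℕ) : SimpleGraph (ZMod p) :=
  SimpleGraph.fromRel fun x y => (y - x) ^ e = 1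

/-- The points (1-dimensional subspaces) of the projective space `PG(d-1,F)`. -/
def projPoint (F : Type*) [Field F] (d : ℕ) : Type _ :=
  {W : Submodule F (Fin d → F) // Module.finrank F W = 1}

/-- The hyperplanes (`(d-1)`-dimensional subspaces) of the projective space `PG(d-1,F)`. -/
def projHyp (F : Type*) [Field F] (d : ℕ) : Type _ :=
  {W : Submodule F (Fin d → F) // Module.finrank F W = d - 1}

/-- The point-hyperplane incidence graph `B(PG(d-1,q))`. -/
def BPG (F : Type*) [Field F] (d : ℕ) : SimpleGraph (projPoint F d ⊕ projHyp F d) :=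
  SimpleGraph.fromRel fun u v => ∃ (A : projPoint F d) (B : projHyp F d),
    u = Sum.inl A ∧ v = Sum.inr B ∧ A.1 ≤ B.1

/-- The point-hyperplane non-incidence graph `B'(PG(d-1,q))`. -/
def BPG' (F : Type*) [Field F] (d : ℕ) : SimpleGraph (projPoint F d ⊕ projHyp F d) :=
  SimpleGraph.fromRel fun u v => ∃ (A : projPoint F d) (B : projHyp F d),
    u = Sum.inl A ∧ v = Sum.inr B ∧ A.1 ⊓ B.1 = ⊥

/-- The nonzero quadratic residues modulo 11. -/
def quadRes11 : Set (ZMod 11) := {1, 3, 4, 5, 9}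

/-- The graph `B'(H(11))`: vertices are `Z_11` (left part) together with the translates
`R + i` of the residues `R` (right part, indexed by `i`), with `x` adjacent to `R + i`
iff `x ∉ R + i`. -/
def BH11' : SimpleGraph (ZMod 11 ⊕ ZMod 11) :=
  SimpleGraph.fromRel fun u v =>
    ∃ x i : ZMod 11, u = Sum.inl x ∧ v = Sum.inr i ∧ x - i ∉ quadRes11

/-- The Hamming graph `H(2,4)`. -/
def hamming24 : SimpleGraph (Fin 4 × Fin 4) :=
  SimpleGraph.fromRel fun u v => (u.1 = v.1 ∧ u.2 ≠ v.2) ∨ (u.1 ≠ v.1 ∧ u.2 = v.2)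

/-- The Petersen graph: the Kneser graph on 2-subsets of a 5-set. -/
def petersen : SimpleGraph {s : Finset (Fin 5) // s.card = 2} :=
  SimpleGraph.fromRel fun u v => Disjoint u.1 v.1

/-- The 5-dimensional hypercube graph. -/
def cube5 : SimpleGraph (Fin 5 → ZMod 2) :=
  SimpleGraph.fromRel fun x y => ∃! i : Fin 5, x i ≠ y i

/-- The antipodal pairing on the 5-cube. -/
def antipodal5 : Setoid (Fin 5 → ZMod 2) where
  r x y := y = x ∨ y = x + 1
  iseqv := by
    have key : ∀ x : Fin 5 → ZMod 2, x + 1 + 1 = x := by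
      intro x
      funext i
      show x i + 1 + 1 = x i
      have h : (1 + 1 : ZMod 2) = 0 := by decide
      rw [add_assoc, h, add_zero]
    refine ⟨fun x => Or.inl rfl, ?_, ?_⟩
    · rintro x y (rfl | rfl)
      · exact Or.inl rfl
      · exact Or.inr (key x).symm
    · rintro x y z (rfl | rfl) h2
      · exact h2
      · rcases h2 with rfl | rfl
        · exact Or.inr rfl
        · exact Or.inl (key x)

/-- The folded 5-cube: the quotient of the 5-cube by the antipodal pairing. -/
def foldedCube5 : SimpleGraph (Quotient antipodal5) := setoidQuot cube5 antipodal5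

/-- The Clebsch graph: the complement of the folded 5-cube. -/
def clebsch : SimpleGraph (Quotient antipodal5) := foldedCube5ᶜ

/-- The standard double cover of `Γ`. -/
def doubleCover (Γ : SimpleGraph V) : SimpleGraph (V × Bool) :=
  SimpleGraph.fromRel fun u v => Γ.Adj u.1 v.1 ∧ u.2 = true ∧ v.2 = false

/-- The swap `(x,i) ↦ (x, 3-i)` of the two levels of the standard double cover. -/
def swapPerm (V : Type*) : Equiv.Perm (V × Bool) :=
  Equiv.prodCongr (Equiv.refl V) ⟨Bool.not, Bool.not, Bool.not_not, Bool.not_not⟩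

/-- The Cayley graph of a group with connection set `S` (edges `{g, s*g}`). -/
def cayleyGraph {T : Type*} [Group T] (S : Set T) : SimpleGraph T :=
  SimpleGraph.fromRel fun g h => ∃ s ∈ S, h = s * g

/-! ## `PGL` and `PΓL` acting on projective points -/

/-- `g` is a `τ`-semilinear bijection. -/
def IsSemilinearBij (F : Type*) [Field F] (d : ℕ) (τ : F ≃+* F)
    (g : (Fin d → F) ≃ (Fin d → F)) : Prop :=
  (∀ x y : Fin d → F, g (x + y) = g x + g y) ∧
  ∀ (c : F) (x : Fin d → F), g (c • x) = τ c • g x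

/-- `g` is a linear bijection. -/
def IsLinearBij (F : Type*) [Field F] (d : ℕ) (g : (Fin d → F) ≃ (Fin d → F)) : Prop :=
  (∀ x y : Fin d → F, g (x + y) = g x + g y) ∧
  ∀ (c : F) (x : Fin d → F), g (c • x) = c • g x

/-- The permutation `π` of the projective points is induced by the bijection `g`. -/
def inducesProjMap (F : Type*) [Field F] (d : ℕ) (g : (Fin d → F) ≃ (Fin d → F))
    (π : Equiv.Perm (projPoint F d)) : Prop :=
  ∀ W : projPoint F d, ((π W).1 : Set (Fin d → F)) = ⇑g '' ((W.1 : Submodule F (Fin d → F)) : Set (Fin d → F))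

/-- `PΓL(d,F)` as a permutation group on the projective points: the permutations induced
by semilinear bijections. -/
def PGammaL (F : Type*) [Field F] (d : ℕ) : Subgroup (Equiv.Perm (projPoint F d)) where
  carrier := {π | ∃ (τ : F ≃+* F) (g : (Fin d → F) ≃ (Fin d → F)),
    IsSemilinearBij F d τ g ∧ inducesProjMap F d g π}
  one_mem' := ⟨RingEquiv.refl F, Equiv.refl _, ⟨fun _ _ => rfl, fun _ _ => rfl⟩,
    fun W => by simp [inducesProjMap]⟩
  mul_mem' := by
    rintro a b ⟨τa, ga, ⟨haAdd, haSmul⟩, hIa⟩ ⟨τb, gb, ⟨hbAdd, hbSmul⟩, hIb⟩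
    refine ⟨τb.trans τa, gb.trans ga, ⟨?_, ?_⟩, ?_⟩
    · intro x y
      simp only [Equiv.trans_apply, hbAdd, haAdd]
    · intro c x
      simp only [Equiv.trans_apply, hbSmul, haSmul, RingEquiv.trans_apply]
    · intro W
      have h2 := hIa (b W)
      have h := hIb W
      rw [show ((a * b) W) = a (b W) from rfl, h2, h,
        show ⇑(gb.trans ga) = ⇑ga ∘ ⇑gb from rfl, Set.image_comp]
  inv_mem' := by
    rintro a ⟨τ, g, ⟨hAdd, hSmul⟩, hI⟩
    refine ⟨τ.symm, g.symm, ⟨?_, ?_⟩, ?_⟩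
    · intro x y
      apply g.injective
      rw [hAdd, Equiv.apply_symm_apply, Equiv.apply_symm_apply, Equiv.apply_symm_apply]
    · intro c x
      apply g.injective
      rw [hSmul, Equiv.apply_symm_apply, Equiv.apply_symm_apply,
        RingEquiv.apply_symm_apply]
    · intro W
      have h := hI (a⁻¹ W)
      rw [show a (a⁻¹ W) = W from Equiv.apply_symm_apply a W] at h
      rw [h, Equiv.symm_image_image]

/-- `PGL(d,F)` as a permutation group on the projective points: the permutations induced
by linear bijections. -/
def PGLsub (F : Type*) [Field F] (d : ℕ) : Subgroup (Equiv.Perm (projPoint F d)) where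
  carrier := {π | ∃ g : (Fin d → F) ≃ (Fin d → F), IsLinearBij F d g ∧ inducesProjMap F d g π}
  one_mem' := ⟨Equiv.refl _, ⟨fun _ _ => rfl, fun _ _ => rfl⟩, fun W => by simp [inducesProjMap]⟩
  mul_mem' := by
    rintro a b ⟨ga, ⟨haAdd, haSmul⟩, hIa⟩ ⟨gb, ⟨hbAdd, hbSmul⟩, hIb⟩
    refine ⟨gb.trans ga, ⟨?_, ?_⟩, ?_⟩
    · intro x y
      simp only [Equiv.trans_apply, hbAdd, haAdd]
    · intro c x
      simp only [Equiv.trans_apply, hbSmul, haSmul]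
    · intro W
      have h2 := hIa (b W)
      have h := hIb W
      rw [show ((a * b) W) = a (b W) from rfl, h2, h,
        show ⇑(gb.trans ga) = ⇑ga ∘ ⇑gb from rfl, Set.image_comp]
  inv_mem' := by
    rintro a ⟨g, ⟨hAdd, hSmul⟩, hI⟩
    refine ⟨g.symm, ⟨?_, ?_⟩, ?_⟩
    · intro x y
      apply g.injective
      rw [hAdd, Equiv.apply_symm_apply, Equiv.apply_symm_apply, Equiv.apply_symm_apply]
    · intro c x
      apply g.injective
      rw [hSmul, Equiv.apply_symm_apply, Equiv.apply_symm_apply]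
    · intro W
      have h := hI (a⁻¹ W)
      rw [show a (a⁻¹ W) = W from Equiv.apply_symm_apply a W] at h
      rw [h, Equiv.symm_image_image]

/-- The graphs appearing in the main theorem (Theorem 1.1 (a)-(g)). -/
def IsBasicGraph {W : Type*} (Δ : SimpleGraph W) : Prop :=
  (∃ n : ℕ, 2 ≤ n ∧ Nonempty (Δ ≃g completeBipartiteGraph (Fin n) (Fin n))) ∨
  (∃ n : ℕ, 3 ≤ n ∧ Nonempty (Δ ≃g (⊤ : SimpleGraph (Fin n)))) ∨
  (∃ n : ℕ, 3 ≤ n ∧ Nonempty (Δ ≃g completeMultipartite n 2)) ∨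
  (∃ n : ℕ, 3 ≤ n ∧ Nonempty (Δ ≃g knnMinus n)) ∨
  (∃ p e : ℕ, p.Prime ∧ 1 < e ∧ e ∣ p - 1 ∧ Nonempty (Δ ≃g graphG p e)) ∨
  (∃ (F : Type) (iF : Field F) (_ : Finite F) (d : ℕ), 3 ≤ d ∧
    (Nonempty (Δ ≃g @BPG F iF d) ∨ Nonempty (Δ ≃g @BPG' F iF d))) ∨
  (∃ p e : ℕ, p.Prime ∧ 2 ∣ e ∧ e ∣ p - 1 ∧ Nonempty (Δ ≃g cayCirc p e)) ∨
  Nonempty (Δ ≃g BH11') ∨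
  (Nonempty (Δ ≃g petersen) ∨ Nonempty (Δ ≃g petersenᶜ)) ∨
  (Nonempty (Δ ≃g hamming24) ∨ Nonempty (Δ ≃g hamming24ᶜ)) ∨
  (Nonempty (Δ ≃g clebsch) ∨ Nonempty (Δ ≃g clebschᶜ))

section AuxLemmas

variable {Γ : SimpleGraph V} {Δ₀ Δ₁ : Set V} {G : Subgroup (Equiv.Perm V)}

lemma mem_setStab' {Δ : Set V} {σ : Equiv.Perm V} :
    σ ∈ setStab G Δ ↔ σ ∈ G ∧ ⇑σ '' Δ = Δ := Iff.rfl

lemma mem_side (hbip : IsBipartition Γ Δ₀ Δ₁) (a : V) : a ∈ Δ₀ ∨ a ∈ Δ₁ := by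
  have h : a ∈ Δ₀ ∪ Δ₁ := hbip.covers ▸ Set.mem_univ a
  exact h

lemma mem1_iff (hbip : IsBipartition Γ Δ₀ Δ₁) {a : V} : a ∈ Δ₁ ↔ a ∉ Δ₀ := by
  constructor
  · intro h1 h0; exact Set.disjoint_left.mp hbip.disj h0 h1
  · intro h0
    rcases mem_side hbip a with h | h
    · exact absurd h h0
    · exact h

lemma adj_flip (hbip : IsBipartition Γ Δ₀ Δ₁) {a b : V} (h : Γ.Adj a b) :
    a ∈ Δ₀ ↔ b ∈ Δ₁ := by
  constructor
  · intro ha; rw [mem1_iff hbip]; intro hb; exact hbip.not_adj₀ a ha b hb h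
  · intro hb
    rcases mem_side hbip a with h0 | h1
    · exact h0
    · exact (hbip.not_adj₁ a h1 b hb h).elim

lemma walk_parity (hbip : IsBipartition Γ Δ₀ Δ₁) {u w : V} (p : Γ.Walk u w) :
    u ∈ Δ₀ ↔ (w ∈ Δ₀ ↔ Even p.length) := by
  induction p with
  | nil => simp
  | @cons u x w h q ih =>
    rw [SimpleGraph.Walk.length_cons, Nat.even_add_one]
    have h1 := adj_flip hbip h
    have h2 : x ∈ Δ₁ ↔ x ∉ Δ₀ := mem1_iff hbip
    tauto

lemma bip_swap (hbip : IsBipartition Γ Δ₀ Δ₁) : IsBipartition Γ Δ₁ Δ₀ :=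
  ⟨by rw [Set.union_comm]; exact hbip.covers, hbip.disj.symm, hbip.not_adj₁, hbip.not_adj₀⟩

lemma bip_unique (hconn : Γ.Connected) (hbip : IsBipartition Γ Δ₀ Δ₁) {A B : Set V}
    (hAB : IsBipartition Γ A B) {v : V} (hv0 : v ∈ Δ₀) (hvA : v ∈ A) :
    A = Δ₀ ∧ B = Δ₁ := by
  have key : ∀ u, u ∈ A ↔ u ∈ Δ₀ := by
    intro u
    obtain ⟨p⟩ := hconn.preconnected v u
    have h1 := walk_parity hbip p
    have h2 := walk_parity hAB p
    tauto
  have hA : A = Δ₀ := Set.ext key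
  refine ⟨hA, Set.ext fun u => ?_⟩
  have h1 : u ∈ B ↔ u ∉ A := mem1_iff hAB
  have h2 : u ∈ Δ₁ ↔ u ∉ Δ₀ := mem1_iff hbip
  rw [h1, h2, hA]

lemma fix_image {σ : Equiv.Perm V} {Δ : Set V} (h : ∀ v ∈ Δ, σ v = v) : ⇑σ '' Δ = Δ := by
  ext x
  constructor
  · rintro ⟨a, ha, rfl⟩; rw [h a ha]; exact ha
  · intro hx; exact ⟨x, hx, h x hx⟩

lemma aut_bip (hbip : IsBipartition Γ Δ₀ Δ₁) {σ : Equiv.Perm V} (hσ : IsAut Γ σ) :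
    IsBipartition Γ (⇑σ '' Δ₀) (⇑σ '' Δ₁) where
  covers := by
    rw [← Set.image_union, hbip.covers, Set.image_univ, Equiv.range_eq_univ]
  disj := (Set.disjoint_image_iff σ.injective).mpr hbip.disj
  not_adj₀ := by
    rintro _ ⟨a, ha, rfl⟩ _ ⟨b, hb, rfl⟩ hadj
    exact hbip.not_adj₀ a ha b hb ((hσ a b).mp hadj)
  not_adj₁ := by
    rintro _ ⟨a, ha, rfl⟩ _ ⟨b, hb, rfl⟩ hadj
    exact hbip.not_adj₁ a ha b hb ((hσ a b).mp hadj)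

lemma aut_sides (hconn : Γ.Connected) (hbip : IsBipartition Γ Δ₀ Δ₁)
    (hne0 : Δ₀.Nonempty) {σ : Equiv.Perm V} (hσ : IsAut Γ σ) :
    (⇑σ '' Δ₀ = Δ₀ ∧ ⇑σ '' Δ₁ = Δ₁) ∨ (⇑σ '' Δ₀ = Δ₁ ∧ ⇑σ '' Δ₁ = Δ₀) := by
  obtain ⟨v0, hv0⟩ := hne0
  have hmem : σ v0 ∈ ⇑σ '' Δ₀ := ⟨v0, hv0, rfl⟩
  rcases mem_side hbip (σ v0) with h | h
  · exact Or.inl (bip_unique hconn hbip (aut_bip hbip hσ) h hmem)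
  · exact Or.inr (bip_unique hconn (bip_swap hbip) (aut_bip hbip hσ) h hmem)

/-- The pointwise stabiliser of `Δ` inside `G`. -/
def kerOn (G : Subgroup (Equiv.Perm V)) (Δ : Set V) : Subgroup (Equiv.Perm V) where
  carrier := {σ | σ ∈ G ∧ ∀ v ∈ Δ, σ v = v}
  one_mem' := ⟨G.one_mem, fun v _ => rfl⟩
  mul_mem' := by
    rintro a b ⟨haG, ha⟩ ⟨hbG, hb⟩
    refine ⟨G.mul_mem haG hbG, fun v hv => ?_⟩
    show a (b v) = v
    rw [hb v hv, ha v hv]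
  inv_mem' := by
    rintro a ⟨haG, ha⟩
    refine ⟨G.inv_mem haG, fun v hv => ?_⟩
    conv_lhs => rw [← ha v hv]
    exact Equiv.symm_apply_apply a v

lemma mem_kerOn {Δ : Set V} {σ : Equiv.Perm V} :
    σ ∈ kerOn G Δ ↔ σ ∈ G ∧ ∀ v ∈ Δ, σ v = v := Iff.rfl

/-- The elements of `G` stabilizing `Δ` setwise and agreeing on `Δ` with some element
of `K`. -/
def agreeSub (G : Subgroup (Equiv.Perm V)) (Δ : Set V) (K : Subgroup (Equiv.Perm V)) :
    Subgroup (Equiv.Perm V) where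
  carrier := {σ | σ ∈ G ∧ ⇑σ '' Δ = Δ ∧ ∃ τ ∈ K, ∀ v ∈ Δ, τ v = σ v}
  one_mem' := ⟨G.one_mem, by simp, 1, K.one_mem, fun v _ => rfl⟩
  mul_mem' := by
    rintro a b ⟨haG, haΔ, τa, hτa, ha⟩ ⟨hbG, hbΔ, τb, hτb, hb⟩
    refine ⟨G.mul_mem haG hbG, ?_, τa * τb, K.mul_mem hτa hτb, fun v hv => ?_⟩
    · rw [show ⇑(a * b) = ⇑a ∘ ⇑b from rfl, Set.image_comp, hbΔ, haΔ]
    · have hbv : b v ∈ Δ := by rw [← hbΔ]; exact ⟨v, hv, rfl⟩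
      show τa (τb v) = a (b v)
      rw [hb v hv, ha (b v) hbv]
  inv_mem' := by
    rintro a ⟨haG, haΔ, τ, hτ, h⟩
    refine ⟨G.inv_mem haG, ?_, τ⁻¹, K.inv_mem hτ, fun v hv => ?_⟩
    · conv_lhs => rw [← haΔ]
      exact Equiv.symm_image_image a Δ
    · have hw : a⁻¹ v ∈ Δ := by
        obtain ⟨u, hu, huv⟩ : v ∈ ⇑a '' Δ := haΔ.symm ▸ hv
        rw [← huv]; simpa using hu
      have : τ (a⁻¹ v) = v := by
        rw [h (a⁻¹ v) hw]; exact Equiv.apply_symm_apply a v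
      conv_lhs => rw [← this]
      exact Equiv.symm_apply_apply τ (a⁻¹ v)

lemma mem_agreeSub {Δ : Set V} {K : Subgroup (Equiv.Perm V)} {σ : Equiv.Perm V} :
    σ ∈ agreeSub G Δ K ↔ σ ∈ G ∧ ⇑σ '' Δ = Δ ∧ ∃ τ ∈ K, ∀ v ∈ Δ, τ v = σ v := Iff.rfl

end AuxLemmas

/-- **Lemma 2.8.** If `Γ` is a connected `G`-arc-transitive graph with `G`
bi-quasiprimitive on the vertices (so `Γ` is bipartite, with halves `Δ₀`, `Δ₁`), and the
setwise stabiliser `G⁺` of the halves is unfaithful on each half, then `Γ ≅ K_{n,n}`. -/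
theorem stmt6 {V : Type*} [Fintype V] (Γ : SimpleGraph V) (G : Subgroup (Equiv.Perm V))
    (hG : G ≤ autGroup Γ) (hconn : Γ.Connected) (hat : ArcTrans Γ G)
    (hbqp : BiQuasiprimitive G) (Δ₀ Δ₁ : Set V) (hbip : IsBipartition Γ Δ₀ Δ₁)
    (hunf0 : ∃ σ ∈ plusStab G Δ₀ Δ₁, σ ≠ 1 ∧ ∀ v ∈ Δ₀, σ v = v)
    (hunf1 : ∃ σ ∈ plusStab G Δ₀ Δ₁, σ ≠ 1 ∧ ∀ v ∈ Δ₁, σ v = v) :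
    ∃ n : ℕ, 2 ≤ n ∧ Nonempty (Γ ≃g completeBipartiteGraph (Fin n) (Fin n)) := by
  classical
  obtain ⟨σ0, hσ0P, hσ0ne, hσ0fix⟩ := hunf0
  obtain ⟨σ1, hσ1P, hσ1ne, hσ1fix⟩ := hunf1
  have hσ0G : σ0 ∈ G := hσ0P.1.1
  have hσ1G : σ1 ∈ G := hσ1P.1.1
  -- moved points give nonempty halves
  obtain ⟨w1, hw1⟩ : ∃ v, σ1 v ≠ v := by
    by_contra h; push_neg at h; exact hσ1ne (Equiv.ext h)
  have hw1Δ0 : w1 ∈ Δ₀ := by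
    rcases mem_side hbip w1 with h | h
    · exact h
    · exact absurd (hσ1fix w1 h) hw1
  have hne0 : Δ₀.Nonempty := ⟨w1, hw1Δ0⟩
  obtain ⟨w0, hw0⟩ : ∃ v, σ0 v ≠ v := by
    by_contra h; push_neg at h; exact hσ0ne (Equiv.ext h)
  have hw0Δ1 : w0 ∈ Δ₁ := by
    rcases mem_side hbip w0 with h | h
    · exact absurd (hσ0fix w0 h) hw0
    · exact h
  have hne1 : Δ₁.Nonempty := ⟨w0, hw0Δ1⟩
  have hAut : ∀ g ∈ G, IsAut Γ g := fun g hg => hG hg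
  have sides : ∀ g ∈ G,
      (⇑g '' Δ₀ = Δ₀ ∧ ⇑g '' Δ₁ = Δ₁) ∨ (⇑g '' Δ₀ = Δ₁ ∧ ⇑g '' Δ₁ = Δ₀) :=
    fun g hg => aut_sides hconn hbip hne0 (hAut g hg)
  -- the two kernels stabilize both halves setwise
  have kstab0 : ∀ σ ∈ G, (∀ v ∈ Δ₀, σ v = v) → (⇑σ '' Δ₀ = Δ₀ ∧ ⇑σ '' Δ₁ = Δ₁) := by
    intro σ hg hfix
    have h0 : ⇑σ '' Δ₀ = Δ₀ := fix_image hfix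
    rcases sides σ hg with h | h
    · exact h
    · exfalso
      have heq : Δ₁ = Δ₀ := by rw [← h.1, h0]
      obtain ⟨x, hx⟩ := hne1
      have hx0 : x ∈ Δ₀ := by rw [← heq]; exact hx
      exact Set.disjoint_left.mp hbip.disj hx0 hx
  have kstab1 : ∀ σ ∈ G, (∀ v ∈ Δ₁, σ v = v) → (⇑σ '' Δ₀ = Δ₀ ∧ ⇑σ '' Δ₁ = Δ₁) := by
    intro σ hg hfix
    have h1 : ⇑σ '' Δ₁ = Δ₁ := fix_image hfix
    rcases sides σ hg with h | h
    · exact h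
    · exfalso
      have heq : Δ₀ = Δ₁ := by rw [← h.2, h1]
      obtain ⟨x, hx⟩ := hne0
      have hx1 : x ∈ Δ₁ := by rw [← heq]; exact hx
      exact Set.disjoint_left.mp hbip.disj hx hx1
  set K0 : Subgroup (Equiv.Perm V) := kerOn G Δ₀ with hK0def
  set K1 : Subgroup (Equiv.Perm V) := kerOn G Δ₁ with hK1def
  have hσ0K : σ0 ∈ K0 := ⟨hσ0G, hσ0fix⟩
  have hσ1K : σ1 ∈ K1 := ⟨hσ1G, hσ1fix⟩
  set N : Subgroup (Equiv.Perm V) := K0 ⊔ K1 with hNdef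
  have hK0G : K0 ≤ G := fun σ h => h.1
  have hK1G : K1 ≤ G := fun σ h => h.1
  have hNG : N ≤ G := sup_le hK0G hK1G
  -- every element of N stabilizes both halves setwise
  have hNstab : ∀ σ ∈ N, ⇑σ '' Δ₀ = Δ₀ ∧ ⇑σ '' Δ₁ = Δ₁ := by
    have hsub : N ≤ plusStab G Δ₀ Δ₁ := by
      apply sup_le
      · intro σ hσ
        obtain ⟨h1, h2⟩ := kstab0 σ hσ.1 hσ.2
        exact ⟨⟨hσ.1, h1⟩, h2⟩
      · intro σ hσ
        obtain ⟨h1, h2⟩ := kstab1 σ hσ.1 hσ.2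
        exact ⟨⟨hσ.1, h1⟩, h2⟩
    intro σ hσ
    have h := hsub hσ
    exact ⟨h.1.2, h.2⟩
  -- N is normal in G
  have hNconj : ∀ g ∈ G, ∀ x ∈ N, g * x * g⁻¹ ∈ N := by
    intro g hg
    have key : ∀ (x : Equiv.Perm V) (Δ : Set V), (∀ v ∈ Δ, x v = v) →
        ∀ v ∈ ⇑g '' Δ, (g * x * g⁻¹) v = v := by
      rintro x Δ hfix v ⟨w, hw, rfl⟩
      show g (x (g⁻¹ (g w))) = g w
      rw [show g⁻¹ (g w) = w from Equiv.symm_apply_apply g w, hfix w hw]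
    have hle : N ≤ Subgroup.comap (MulAut.conj g).toMonoidHom N := by
      apply sup_le
      · intro x hx
        rw [Subgroup.mem_comap]
        have hxg : g * x * g⁻¹ ∈ G := G.mul_mem (G.mul_mem hg hx.1) (G.inv_mem hg)
        have hfix := key x Δ₀ hx.2
        show g * x * g⁻¹ ∈ N
        rcases sides g hg with h | h
        · exact le_sup_left (a := K0) (b := K1) ⟨hxg, by rw [← h.1]; exact hfix⟩
        · exact le_sup_right (a := K0) (b := K1) ⟨hxg, by rw [← h.1]; exact hfix⟩
      · intro x hx
        rw [Subgroup.mem_comap]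
        have hxg : g * x * g⁻¹ ∈ G := G.mul_mem (G.mul_mem hg hx.1) (G.inv_mem hg)
        have hfix := key x Δ₁ hx.2
        show g * x * g⁻¹ ∈ N
        rcases sides g hg with h | h
        · exact le_sup_right (a := K0) (b := K1) ⟨hxg, by rw [← h.2]; exact hfix⟩
        · exact le_sup_left (a := K0) (b := K1) ⟨hxg, by rw [← h.2]; exact hfix⟩
    intro x hx
    exact hle hx
  have hNbot : N ≠ ⊥ := by
    intro h
    have hmem : σ1 ∈ N := le_sup_right (a := K0) (b := K1) hσ1K
    rw [h] at hmem
    exact hσ1ne (Subgroup.mem_bot.mp hmem)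
  obtain ⟨f, hf⟩ := hbqp.2.1 N ⟨hNG, hNconj⟩ hNbot
  -- orbits of N stay within halves
  have horb0 : ∀ x ∈ Δ₀, ∀ y ∈ orb N x, y ∈ Δ₀ := by
    rintro x hx y ⟨σ, hσ, rfl⟩
    rw [← (hNstab σ hσ).1]
    exact ⟨x, hx, rfl⟩
  have horb1 : ∀ x ∈ Δ₁, ∀ y ∈ orb N x, y ∈ Δ₁ := by
    rintro x hx y ⟨σ, hσ, rfl⟩
    rw [← (hNstab σ hσ).2]
    exact ⟨x, hx, rfl⟩
  have horbsymm : ∀ x y : V, y ∈ orb N x → x ∈ orb N y := by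
    rintro x y ⟨σ, hσ, rfl⟩
    exact ⟨σ⁻¹, N.inv_mem hσ, Equiv.symm_apply_apply σ x⟩
  obtain ⟨i, hi⟩ := hf w1
  have hfi : f i ∈ Δ₀ := horb0 w1 hw1Δ0 (f i) (horbsymm (f i) w1 hi)
  obtain ⟨j, hj⟩ := hf w0
  have hfj : f j ∈ Δ₁ := horb1 w0 hw0Δ1 (f j) (horbsymm (f j) w0 hj)
  have hij : i ≠ j := by
    intro h
    rw [h] at hfi
    exact Set.disjoint_left.mp hbip.disj hfi hfj
  have hdec : ∀ a b c : Fin 2, a ≠ b → c = a ∨ c = b := by decide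
  -- N is transitive on each half
  have hidx0 : ∀ u ∈ Δ₀, u ∈ orb N (f i) := by
    intro u hu
    obtain ⟨k, hk⟩ := hf u
    rcases hdec i j k hij with h | h
    · rw [← h]; exact hk
    · exfalso
      rw [h] at hk
      exact Set.disjoint_left.mp hbip.disj hu (horb1 (f j) hfj u hk)
  have hidx1 : ∀ u ∈ Δ₁, u ∈ orb N (f j) := by
    intro u hu
    obtain ⟨k, hk⟩ := hf u
    rcases hdec i j k hij with h | h
    · exfalso
      rw [h] at hk
      exact Set.disjoint_left.mp hbip.disj (horb0 (f i) hfi u hk) hu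
    · rw [← h]; exact hk
  have trans0 : ∀ u ∈ Δ₀, ∀ u' ∈ Δ₀, ∃ σ ∈ N, σ u = u' := by
    intro u hu u' hu'
    obtain ⟨σa, hσa, ha⟩ := hidx0 u hu
    obtain ⟨σb, hσb, hb⟩ := hidx0 u' hu'
    refine ⟨σb * σa⁻¹, N.mul_mem hσb (N.inv_mem hσa), ?_⟩
    show σb (σa⁻¹ u) = u'
    rw [← ha, show σa⁻¹ (σa (f i)) = f i from Equiv.symm_apply_apply σa (f i), hb]
  have trans1 : ∀ u ∈ Δ₁, ∀ u' ∈ Δ₁, ∃ σ ∈ N, σ u = u' := by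
    intro u hu u' hu'
    obtain ⟨σa, hσa, ha⟩ := hidx1 u hu
    obtain ⟨σb, hσb, hb⟩ := hidx1 u' hu'
    refine ⟨σb * σa⁻¹, N.mul_mem hσb (N.inv_mem hσa), ?_⟩
    show σb (σa⁻¹ u) = u'
    rw [← ha, show σa⁻¹ (σa (f j)) = f j from Equiv.symm_apply_apply σa (f j), hb]
  -- K1 is transitive on Δ₀
  have hNA0 : N ≤ agreeSub G Δ₀ K1 := by
    apply sup_le
    · intro σ hσ
      exact ⟨hσ.1, (kstab0 σ hσ.1 hσ.2).1, 1, K1.one_mem,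
        fun v hv => by rw [hσ.2 v hv]; rfl⟩
    · intro σ hσ
      exact ⟨hσ.1, (kstab1 σ hσ.1 hσ.2).1, σ, hσ, fun v _ => rfl⟩
  have hNA1 : N ≤ agreeSub G Δ₁ K0 := by
    apply sup_le
    · intro σ hσ
      exact ⟨hσ.1, (kstab0 σ hσ.1 hσ.2).2, σ, hσ, fun v _ => rfl⟩
    · intro σ hσ
      exact ⟨hσ.1, (kstab1 σ hσ.1 hσ.2).2, 1, K0.one_mem,
        fun v hv => by rw [hσ.2 v hv]; rfl⟩
  have transK1 : ∀ u ∈ Δ₀, ∀ u' ∈ Δ₀, ∃ τ ∈ K1, τ u = u' := by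
    intro u hu u' hu'
    obtain ⟨σ, hσ, hσu⟩ := trans0 u hu u' hu'
    obtain ⟨-, -, τ, hτ, hagree⟩ := hNA0 hσ
    exact ⟨τ, hτ, by rw [hagree u hu, hσu]⟩
  have transK0 : ∀ u ∈ Δ₁, ∀ u' ∈ Δ₁, ∃ τ ∈ K0, τ u = u' := by
    intro u hu u' hu'
    obtain ⟨σ, hσ, hσu⟩ := trans1 u hu u' hu'
    obtain ⟨-, -, τ, hτ, hagree⟩ := hNA1 hσ
    exact ⟨τ, hτ, by rw [hagree u hu, hσu]⟩
  -- there is an edge, with one endpoint in each half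
  obtain ⟨a, haΔ, b, hbΔ, hab⟩ : ∃ a ∈ Δ₀, ∃ b ∈ Δ₁, Γ.Adj a b := by
    have hedge' : ∀ {x y : V}, Γ.Walk x y → x ≠ y → ∃ a b : V, Γ.Adj a b := by
      intro x y p hxy
      cases p with
      | nil => exact absurd rfl hxy
      | cons h q => exact ⟨_, _, h⟩
    obtain ⟨p⟩ := hconn.preconnected w1 (σ1 w1)
    obtain ⟨x, y, hxy⟩ := hedge' p (fun h => hw1 h.symm)
    rcases mem_side hbip x with h | h
    · exact ⟨x, h, y, (adj_flip hbip hxy).mp h, hxy⟩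
    · exact ⟨y, (adj_flip hbip hxy.symm).mpr h, x, h, hxy.symm⟩
  -- Γ is complete bipartite
  have complete : ∀ x ∈ Δ₀, ∀ y ∈ Δ₁, Γ.Adj x y := by
    intro x hx y hy
    obtain ⟨τ, hτ, hτa⟩ := transK1 a haΔ x hx
    have hAdj1 : Γ.Adj x b := by
      have h := (hAut τ hτ.1 a b).mpr hab
      rwa [hτa, hτ.2 b hbΔ] at h
    obtain ⟨ρ, hρ, hρb⟩ := transK0 b hbΔ y hy
    have h := (hAut ρ hρ.1 x b).mpr hAdj1
    rwa [hρ.2 x hx, hρb] at h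
  have adjIff : ∀ x y : V, Γ.Adj x y ↔ ((x ∈ Δ₀ ∧ y ∈ Δ₁) ∨ (x ∈ Δ₁ ∧ y ∈ Δ₀)) := by
    intro x y
    constructor
    · intro h
      rcases mem_side hbip x with hx | hx
      · exact Or.inl ⟨hx, (adj_flip hbip h).mp hx⟩
      · exact Or.inr ⟨hx, (adj_flip hbip h.symm).mpr hx⟩
    · rintro (⟨hx, hy⟩ | ⟨hx, hy⟩)
      · exact complete x hx y hy
      · exact (complete y hy x hx).symm
  -- the halves have equal cardinality
  obtain ⟨g, hg, hga⟩ := hbqp.1 a b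
  have himg : ⇑g '' Δ₀ = Δ₁ := by
    rcases sides g hg with h | h
    · exfalso
      have : b ∈ Δ₀ := by rw [← h.1, ← hga]; exact ⟨a, haΔ, rfl⟩
      exact Set.disjoint_left.mp hbip.disj this hbΔ
    · exact h.1
  have eimg : ↥Δ₀ ≃ ↥Δ₁ := (Equiv.Set.image ⇑g Δ₀ g.injective).trans (Equiv.setCongr himg)
  set n : ℕ := Nat.card ↥Δ₀ with hn
  have hcard : Nat.card ↥Δ₁ = n := (Nat.card_congr eimg).symm
  have e₀ : ↥Δ₀ ≃ Fin n := Finite.equivFinOfCardEq rfl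
  have e₁ : ↥Δ₁ ≃ Fin n := Finite.equivFinOfCardEq hcard
  have hn2 : 2 ≤ n := by
    have hσw1 : σ1 w1 ∈ Δ₀ := by
      rw [← (kstab1 σ1 hσ1G hσ1fix).1]
      exact ⟨w1, hw1Δ0, rfl⟩
    have : Nontrivial ↥Δ₀ := ⟨⟨⟨w1, hw1Δ0⟩, ⟨σ1 w1, hσw1⟩,
      fun h => hw1 (congrArg Subtype.val h).symm⟩⟩
    have := Finite.one_lt_card_iff_nontrivial.mpr this
    omega
  have hmemsplit : ∀ u : V, u ∉ Δ₀ → u ∈ Δ₁ := fun u h => (mem1_iff hbip).mpr h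
  refine ⟨n, hn2, ?_⟩
  let eq : V ≃ (Fin n ⊕ Fin n) :=
    { toFun := fun u => if h : u ∈ Δ₀ then Sum.inl (e₀ ⟨u, h⟩)
        else Sum.inr (e₁ ⟨u, hmemsplit u h⟩)
      invFun := fun s => Sum.elim (fun x => ((e₀.symm x : ↥Δ₀) : V))
        (fun x => ((e₁.symm x : ↥Δ₁) : V)) s
      left_inv := by
        intro u
        by_cases h : u ∈ Δ₀
        · simp [h]
        · simp [h]
      right_inv := by
        rintro (x | x)
        · have h : ((e₀.symm x : ↥Δ₀) : V) ∈ Δ₀ := (e₀.symm x).2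
          simp [h]
        · have h1 : ((e₁.symm x : ↥Δ₁) : V) ∈ Δ₁ := (e₁.symm x).2
          have h : ((e₁.symm x : ↥Δ₁) : V) ∉ Δ₀ := (mem1_iff hbip).mp h1
          simp [h] }
  have heq : ∀ u : V, (u ∈ Δ₀ → ∃ x, eq u = Sum.inl x) ∧ (u ∈ Δ₁ → ∃ x, eq u = Sum.inr x) := by
    intro u
    constructor
    · intro h
      exact ⟨e₀ ⟨u, h⟩, by simp [eq, h]⟩
    · intro h
      have h0 : u ∉ Δ₀ := (mem1_iff hbip).mp h
      exact ⟨e₁ ⟨u, hmemsplit u h0⟩, by simp [eq, h0]⟩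
  refine ⟨⟨eq, @fun u v => ?_⟩⟩
  rw [adjIff u v]
  rcases mem_side hbip u with hu | hu <;> rcases mem_side hbip v with hv | hv
  · obtain ⟨x, hx⟩ := (heq u).1 hu
    obtain ⟨y, hy⟩ := (heq v).1 hv
    have hu1 : u ∉ Δ₁ := fun h => (mem1_iff hbip).mp h hu
    have hv1 : v ∉ Δ₁ := fun h => (mem1_iff hbip).mp h hv
    simp [hx, hy, hu1, hv1]
  · obtain ⟨x, hx⟩ := (heq u).1 hu
    obtain ⟨y, hy⟩ := (heq v).2 hv
    simp [hx, hy, hu, hv]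
  · obtain ⟨x, hx⟩ := (heq u).2 hu
    obtain ⟨y, hy⟩ := (heq v).1 hv
    simp [hx, hy, hu, hv]
  · obtain ⟨x, hx⟩ := (heq u).2 hu
    obtain ⟨y, hy⟩ := (heq v).2 hv
    have hu0 : u ∉ Δ₀ := (mem1_iff hbip).mp hu
    have hv0 : v ∉ Δ₀ := (mem1_iff hbip).mp hv
    simp [hx, hy, hu0, hv0]


end ATB
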